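/- For any observed distribution P with P{Z = z} > 0 for all z ∈ 𝒵 such that 𝐐₀(P, 𝐐*_{WE,M}) ≠ ∅, one has Θ₀(P, 𝐐*_{WE,M}) = Θ₀(P, 𝐐*_{WE}); that is, adding generalized monotonicity to weak instrument exogeneity does not change the identified set for the vector of average potential outcomes whenever these assumptions are consistent with P. -/

import Mathlib

open Finset

/-- A probability mass function on a finite type. -/
structure ProbMass (α : Type) [Fintype α] where
  mass : α → ℝ
  nonneg : ∀ a, 0 ≤ mass a
  total : ∑ a, mass a = 1

/-- Probability of an event under a probability mass function. -/
noncomputable def pr {α : Type} [Fintype α] (Q : ProbMass α) (A : Set α) : ℝ :=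
  ∑ a, A.indicator Q.mass a

/-- Expectation of a real-valued function under a probability mass function. -/
noncomputable def expect {α : Type} [Fintype α] (Q : ProbMass α) (f : α → ℝ) : ℝ :=
  ∑ a, Q.mass a * f a

/-- The latent space: potential outcomes `(Y_d)_{d ∈ D}` taking values in the finite set
`𝒴 ⊂ ℝ`, potential treatments `(D_z)_{z ∈ Z}`, and the instrument `Z`. -/
abbrev Latent (𝒴 : Finset ℝ) (D Z : Type) : Type := (D → ↥𝒴) × (Z → D) × Z

/-- The observed space: `(Y, D, Z)`. -/
abbrev Obs (𝒴 : Finset ℝ) (D Z : Type) : Type := ↥𝒴 × D × Z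

variable {𝒴 : Finset ℝ} {D Z : Type} [Fintype D] [DecidableEq D] [Fintype Z] [DecidableEq Z]

/-- The map `T` sending `((y_d), (d_z), z)` to `(y_{d_z}, d_z, z)`. -/
def Tmap (ω : Latent 𝒴 D Z) : Obs 𝒴 D Z := (ω.1 (ω.2.1 ω.2.2), ω.2.1 ω.2.2, ω.2.2)

/-- `Q` rationalizes `P`: `P = Q ∘ T⁻¹`. -/
def Rationalizes (Q : ProbMass (Latent 𝒴 D Z)) (P : ProbMass (Obs 𝒴 D Z)) : Prop :=
  ∀ o : Obs 𝒴 D Z, P.mass o = pr Q {ω | Tmap ω = o}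

/-- Instrument exogeneity: `((Y_d), (D_z))` is independent of `Z` under `Q`. -/
def Exog (Q : ProbMass (Latent 𝒴 D Z)) : Prop :=
  ∀ (yd : D → ↥𝒴) (dz : Z → D) (z : Z),
    pr Q {ω | ω.1 = yd ∧ ω.2.1 = dz ∧ ω.2.2 = z}
      = pr Q {ω | ω.1 = yd ∧ ω.2.1 = dz} * pr Q {ω | ω.2.2 = z}

/-- `zs` maximally encourages treatment `d` under `Q`:
`Q{D_{zs} ≠ d and D_{z'} = d for some z'} = 0`. -/
def MaxEnc (Q : ProbMass (Latent 𝒴 D Z)) (d : D) (zs : Z) : Prop :=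
  pr Q {ω | ω.2.1 zs ≠ d ∧ ∃ z' : Z, ω.2.1 z' = d} = 0

/-- Generalized monotonicity. -/
def GenMono (Q : ProbMass (Latent 𝒴 D Z)) : Prop :=
  ∀ d : D, ∃ zs : Z, MaxEnc Q d zs

/-- `θ(Q) = (E_Q[Y_d])_{d ∈ D}`, the vector of average potential outcomes. -/
noncomputable def theta (Q : ProbMass (Latent 𝒴 D Z)) : D → ℝ :=
  fun d => expect Q fun ω => (ω.1 d : ℝ)

/-- `𝐐₀(P, 𝐐)`: the set of `Q ∈ 𝐐` that rationalize `P`. -/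
def Q0 (P : ProbMass (Obs 𝒴 D Z)) (QQ : Set (ProbMass (Latent 𝒴 D Z))) :
    Set (ProbMass (Latent 𝒴 D Z)) :=
  {Q | Q ∈ QQ ∧ Rationalizes Q P}

/-- `Θ₀(P, 𝐐)`: the identified set for `θ(Q)`. -/
noncomputable def Theta0 (P : ProbMass (Obs 𝒴 D Z))
    (QQ : Set (ProbMass (Latent 𝒴 D Z))) : Set (D → ℝ) :=
  theta '' Q0 P QQ

/-- Unrestricted potential outcomes: if `Q ∈ 𝐐`, `Q'` is exogenous, and the potential
treatments have the same distribution under `Q'` as under `Q`, then `Q' ∈ 𝐐`. -/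
def UnrestrictedPO (QQ : Set (ProbMass (Latent 𝒴 D Z))) : Prop :=
  ∀ Q ∈ QQ, ∀ Q' : ProbMass (Latent 𝒴 D Z), Exog Q' →
    (∀ dz : Z → D, pr Q' {ω | ω.2.1 = dz} = pr Q {ω | ω.2.1 = dz}) → Q' ∈ QQ

/-- `P{Z = z}`. -/
noncomputable def prZ (P : ProbMass (Obs 𝒴 D Z)) (z : Z) : ℝ :=
  pr P {o | o.2.2 = z}

/-- `P{D = d ∣ Z = z}`. -/
noncomputable def condD (P : ProbMass (Obs 𝒴 D Z)) (d : D) (z : Z) : ℝ :=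
  pr P {o | o.2.1 = d ∧ o.2.2 = z} / prZ P z

/-- `p_{yd|z} = P{Y = y, D = d ∣ Z = z}`. -/
noncomputable def pObs (P : ProbMass (Obs 𝒴 D Z)) (y : ℝ) (d : D) (z : Z) : ℝ :=
  pr P {o | (o.1 : ℝ) = y ∧ o.2.1 = d ∧ o.2.2 = z} / prZ P z

/-- `β_{d|z} = E_P[Y · 1{D = d} ∣ Z = z]`. -/
noncomputable def betaObs (P : ProbMass (Obs 𝒴 D Z)) (d : D) (z : Z) : ℝ :=
  (expect P fun o => if o.2.1 = d ∧ o.2.2 = z then (o.1 : ℝ) else 0) / prZ P z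

/-- Weak instrument exogeneity: for every `d ∈ 𝒟` and `z ∈ 𝒵`, the pair `(Y_d, D_z)` is
independent of `Z` under `Q`. -/
def WeakExog {𝒴 : Finset ℝ} {D Z : Type} [Fintype D] [DecidableEq D]
    [Fintype Z] [DecidableEq Z] (Q : ProbMass (Latent 𝒴 D Z)) : Prop :=
  ∀ (d : D) (z : Z) (y : ↥𝒴) (dv : D) (zv : Z),
    pr Q {ω | ω.1 d = y ∧ ω.2.1 z = dv ∧ ω.2.2 = zv}
      = pr Q {ω | ω.1 d = y ∧ ω.2.1 z = dv} * pr Q {ω | ω.2.2 = zv}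

section Corollary33Aux

open Classical

lemma pr_eq_sum {α : Type} [Fintype α] (Q : ProbMass α) (A : Set α) :
    pr Q A = ∑ a, if a ∈ A then Q.mass a else 0 := by
  refine Finset.sum_congr rfl fun a _ => ?_
  by_cases h : a ∈ A <;> simp [Set.indicator, h]

lemma pr_nonneg' {α : Type} [Fintype α] (Q : ProbMass α) (A : Set α) : 0 ≤ pr Q A := by
  rw [pr_eq_sum]
  refine Finset.sum_nonneg fun a _ => ?_
  by_cases h : a ∈ A <;> simp [h, Q.nonneg a]

lemma pr_congr {α : Type} [Fintype α] (Q : ProbMass α) {A B : Set α}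
    (h : ∀ a, a ∈ A ↔ a ∈ B) : pr Q A = pr Q B := by
  have : A = B := Set.ext h
  rw [this]

lemma mass_zero {α : Type} [Fintype α] (Q : ProbMass α) {A : Set α}
    (h : pr Q A = 0) {a : α} (ha : a ∈ A) : Q.mass a = 0 := by
  rw [pr_eq_sum] at h
  have := (Finset.sum_eq_zero_iff_of_nonneg (fun a _ => by
    by_cases hh : a ∈ A <;> simp [hh, Q.nonneg a])).1 h a (Finset.mem_univ a)
  simpa [ha] using this

lemma pr_compl {α : Type} [Fintype α] (Q : ProbMass α) (A : Set α) :
    pr Q {a | ¬ a ∈ A} = 1 - pr Q A := by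
  rw [pr_eq_sum, pr_eq_sum, eq_sub_iff_add_eq, ← Finset.sum_add_distrib, ← Q.total]
  refine Finset.sum_congr rfl fun a _ => ?_
  by_cases h : a ∈ A <;> simp [h]

/-- Weighted partition of a sum according to the value of `f`. -/
lemma sum_ite_partition {α β : Type} [Fintype α] [Fintype β]
    (m : α → ℝ) (C : α → Prop) (f : α → β) (g : β → ℝ) :
    ∑ y, g y * (∑ a, if f a = y ∧ C a then m a else 0)
      = ∑ a, if C a then g (f a) * m a else 0 := by
  simp_rw [Finset.mul_sum]
  rw [Finset.sum_comm]
  refine Finset.sum_congr rfl fun a _ => ?_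
  by_cases hC : C a
  · simp [hC, mul_ite, Finset.sum_ite_eq]
  · simp [hC]

end Corollary33Aux
section Corollary33Construction

open Classical

variable {𝒴 : Finset ℝ} {D Z : Type} [Fintype D] [DecidableEq D] [Fintype Z] [DecidableEq Z]

/-- Marginal distribution of the vector of potential treatments. -/
noncomputable def lamD (Qb : ProbMass (Latent 𝒴 D Z)) (dz : Z → D) : ℝ :=
  pr Qb {ω | ω.2.1 = dz}

/-- Joint distribution of `Y_d` and the vector of potential treatments. -/
noncomputable def muD (Qb : ProbMass (Latent 𝒴 D Z)) (d : D) (y : ↥𝒴) (dz : Z → D) : ℝ :=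
  pr Qb {ω | ω.1 d = y ∧ ω.2.1 = dz}

/-- `dz` assigns treatment `d` for some instrument value. -/
def hitsD (d : D) (dz : Z → D) : Prop := ∃ z', dz z' = d

/-- Two point distribution on `𝒴` with mass `t` at `yt` and `1 - t` at `yb`. -/
noncomputable def nuD (yb yt : ↥𝒴) (t : ℝ) (y : ↥𝒴) : ℝ :=
  (if y = yt then t else 0) + (if y = yb then 1 - t else 0)

/-- Conditional distribution of `Y_d` given the vector of potential treatments. -/
noncomputable def kappaD (Qb : ProbMass (Latent 𝒴 D Z)) (yb yt : ↥𝒴) (t : D → ℝ)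
    (d : D) (y : ↥𝒴) (dz : Z → D) : ℝ :=
  if hitsD d dz then muD Qb d y dz / lamD Qb dz else nuD yb yt (t d) y

lemma sum_muD (Qb : ProbMass (Latent 𝒴 D Z)) (d : D) (dz : Z → D) :
    ∑ y, muD Qb d y dz = lamD Qb dz := by
  simp only [muD, lamD, pr_eq_sum]
  rw [Finset.sum_comm]
  refine Finset.sum_congr rfl fun ω _ => ?_
  by_cases h : ω.2.1 = dz
  · simp [h, Finset.sum_ite_eq]
  · simp [h]

lemma muD_nonneg (Qb : ProbMass (Latent 𝒴 D Z)) (d : D) (y : ↥𝒴) (dz : Z → D) :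
    0 ≤ muD Qb d y dz := pr_nonneg' _ _

lemma lamD_nonneg (Qb : ProbMass (Latent 𝒴 D Z)) (dz : Z → D) : 0 ≤ lamD Qb dz :=
  pr_nonneg' _ _

lemma muD_eq_zero (Qb : ProbMass (Latent 𝒴 D Z)) {d : D} {y : ↥𝒴} {dz : Z → D}
    (h : lamD Qb dz = 0) : muD Qb d y dz = 0 := by
  have h2 := sum_muD Qb d dz
  rw [h] at h2
  exact (Finset.sum_eq_zero_iff_of_nonneg (fun y _ => muD_nonneg Qb d y dz)).1 h2 y
    (Finset.mem_univ y)

lemma sum_lamD (Qb : ProbMass (Latent 𝒴 D Z)) : ∑ dz, lamD Qb dz = 1 := by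
  simp only [lamD, pr_eq_sum]
  rw [Finset.sum_comm]
  rw [← Qb.total]
  refine Finset.sum_congr rfl fun ω _ => ?_
  have := Finset.sum_ite_eq Finset.univ ω.2.1 (fun _ => Qb.mass ω)
  simp only [Finset.mem_univ, if_true] at this
  convert this using 2 with dz _
  by_cases h : ω.2.1 = dz <;> simp [h]

lemma nuD_nonneg {yb yt : ↥𝒴} {t : ℝ} (h0 : 0 ≤ t) (h1 : t ≤ 1) (y : ↥𝒴) :
    0 ≤ nuD yb yt t y := by
  unfold nuD
  have : (0:ℝ) ≤ 1 - t := by linarith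
  by_cases h : y = yt <;> by_cases h' : y = yb <;> simp [h, h'] <;> positivity

lemma sum_nuD {yb yt : ↥𝒴} (hy : yb ≠ yt) (t : ℝ) : ∑ y, nuD yb yt t y = 1 := by
  simp [nuD, Finset.sum_add_distrib, Finset.sum_ite_eq', hy]

lemma mean_nuD {yb yt : ↥𝒴} (hy : yb ≠ yt) (t : ℝ) :
    ∑ y : ↥𝒴, (y : ℝ) * nuD yb yt t y = t * (yt : ℝ) + (1 - t) * (yb : ℝ) := by
  simp only [nuD, mul_add, mul_ite, mul_zero, Finset.sum_add_distrib]
  rw [Finset.sum_ite_eq' Finset.univ yt fun y : ↥𝒴 => (y : ℝ) * t,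
    Finset.sum_ite_eq' Finset.univ yb fun y : ↥𝒴 => (y : ℝ) * (1 - t)]
  simp [mul_comm]

lemma kappaD_nonneg (Qb : ProbMass (Latent 𝒴 D Z)) (yb yt : ↥𝒴) {t : D → ℝ}
    (ht : ∀ d, 0 ≤ t d ∧ t d ≤ 1) (d : D) (y : ↥𝒴) (dz : Z → D) :
    0 ≤ kappaD Qb yb yt t d y dz := by
  unfold kappaD
  by_cases h : hitsD d dz
  · simp only [h, if_true]
    exact div_nonneg (muD_nonneg _ _ _ _) (lamD_nonneg _ _)
  · simp only [h, if_false]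
    exact nuD_nonneg (ht d).1 (ht d).2 y

lemma sum_kappaD (Qb : ProbMass (Latent 𝒴 D Z)) {yb yt : ↥𝒴} (hy : yb ≠ yt) (t : D → ℝ)
    (d : D) {dz : Z → D} (h : lamD Qb dz ≠ 0) :
    ∑ y, kappaD Qb yb yt t d y dz = 1 := by
  unfold kappaD
  by_cases hh : hitsD d dz
  · simp only [hh, if_true]
    rw [← Finset.sum_div, sum_muD, div_self h]
  · simp only [hh, if_false]
    exact sum_nuD hy _

/-- Marginalizing out all potential outcomes except `Y_d`. -/
lemma sum_prod_kappa (Qb : ProbMass (Latent 𝒴 D Z)) {yb yt : ↥𝒴} (hy : yb ≠ yt) (t : D → ℝ)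
    (d : D) {dz : Z → D} (h : lamD Qb dz ≠ 0) (f : ↥𝒴 → ℝ) :
    ∑ yd : D → ↥𝒴, (∏ d', kappaD Qb yb yt t d' (yd d') dz) * f (yd d)
      = ∑ y, kappaD Qb yb yt t d y dz * f y := by
  set κ := fun (d' : D) (y : ↥𝒴) => kappaD Qb yb yt t d' y dz with hκ
  set g := fun (d' : D) (y : ↥𝒴) => if d' = d then κ d' y * f y else κ d' y with hg
  have key : ∀ yd : D → ↥𝒴, (∏ d', κ d' (yd d')) * f (yd d) = ∏ d', g d' (yd d') := by
    intro yd
    rw [← Finset.mul_prod_erase Finset.univ (fun d' => g d' (yd d')) (Finset.mem_univ d),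
      ← Finset.mul_prod_erase Finset.univ (fun d' => κ d' (yd d')) (Finset.mem_univ d)]
    have : ∏ x ∈ Finset.univ.erase d, g x (yd x) = ∏ x ∈ Finset.univ.erase d, κ x (yd x) :=
      Finset.prod_congr rfl fun x hx => by simp [hg, (Finset.mem_erase.1 hx).1]
    rw [this]
    simp only [hg, if_pos rfl]
    ring
  show ∑ yd : D → ↥𝒴, (∏ d', κ d' (yd d')) * f (yd d) = ∑ y, κ d y * f y
  simp_rw [key]
  rw [← Fintype.prod_sum g]
  rw [← Finset.mul_prod_erase Finset.univ (fun d' => ∑ y, g d' y) (Finset.mem_univ d)]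
  have h1 : ∑ y, g d y = ∑ y, κ d y * f y := by
    refine Finset.sum_congr rfl fun y _ => by simp [hg]
  have h2 : ∏ x ∈ Finset.univ.erase d, ∑ y, g x y = 1 := by
    refine Finset.prod_eq_one fun x hx => ?_
    have hx' : x ≠ d := (Finset.mem_erase.1 hx).1
    have : ∑ y, g x y = ∑ y, κ x y := Finset.sum_congr rfl fun y _ => by simp [hg, hx']
    rw [this]
    exact sum_kappaD Qb hy t x h
  rw [h1, h2, mul_one]

end Corollary33Construction
section Corollary33Obs

open Classical

variable {𝒴 : Finset ℝ} {D Z : Type} [Fintype D] [DecidableEq D] [Fintype Z] [DecidableEq Z]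

/-- Summing fiberwise probabilities over the potential-treatment vector. -/
lemma sum_fiber (Qb : ProbMass (Latent 𝒴 D Z)) (C : Latent 𝒴 D Z → Prop) (g : (Z → D) → Prop) :
    ∑ dz, (if g dz then pr Qb {ω | C ω ∧ ω.2.1 = dz} else 0)
      = pr Qb {ω | C ω ∧ g ω.2.1} := by
  have step : ∀ dz : Z → D, (if g dz then pr Qb {ω | C ω ∧ ω.2.1 = dz} else 0)
      = ∑ ω : Latent 𝒴 D Z, if (C ω ∧ g ω.2.1) ∧ ω.2.1 = dz then Qb.mass ω else 0 := by
    intro dz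
    by_cases h : g dz
    · rw [if_pos h, pr_eq_sum]
      refine Finset.sum_congr rfl fun ω _ => ?_
      by_cases h1 : ω.2.1 = dz
      · rw [h1]; simp [h, h1]
      · simp [h1]
    · rw [if_neg h]
      symm; apply Finset.sum_eq_zero; intro ω _
      by_cases h1 : ω.2.1 = dz
      · have hn : ¬ ((C ω ∧ g ω.2.1) ∧ ω.2.1 = dz) := fun hh => h (h1 ▸ hh.1.2)
        simp [hn]
      · simp [h1]
  simp_rw [step]
  rw [Finset.sum_comm, pr_eq_sum]
  refine Finset.sum_congr rfl fun ω _ => ?_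
  by_cases h : C ω ∧ g ω.2.1
  · simp [h, Finset.sum_ite_eq]
  · simp [h]

/-- Pulling back an observed event through `Tmap`. -/
lemma pr_obs_pull {P : ProbMass (Obs 𝒴 D Z)} {Q : ProbMass (Latent 𝒴 D Z)}
    (hR : Rationalizes Q P) (B : Obs 𝒴 D Z → Prop) :
    pr P {o | B o} = pr Q {ω | B (Tmap ω)} := by
  rw [pr_eq_sum]
  have step : ∀ o : Obs 𝒴 D Z, (if o ∈ {o : Obs 𝒴 D Z | B o} then P.mass o else 0)
      = ∑ ω : Latent 𝒴 D Z, if B (Tmap ω) ∧ Tmap ω = o then Q.mass ω else 0 := by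
    intro o
    by_cases h : B o
    · rw [if_pos (show o ∈ {o : Obs 𝒴 D Z | B o} from h), hR o, pr_eq_sum]
      refine Finset.sum_congr rfl fun ω _ => ?_
      by_cases h1 : Tmap ω = o
      · simp [h1, h]
      · simp [h1]
    · rw [if_neg (show ¬ o ∈ {o : Obs 𝒴 D Z | B o} from h)]
      symm; apply Finset.sum_eq_zero; intro ω _
      by_cases h1 : Tmap ω = o
      · have hn : ¬ (B (Tmap ω) ∧ Tmap ω = o) := fun hh => h (h1 ▸ hh.1)
        simp [hn]
      · simp [h1]
  simp_rw [step]
  rw [Finset.sum_comm, pr_eq_sum]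
  refine Finset.sum_congr rfl fun ω _ => ?_
  by_cases h : B (Tmap ω)
  · simp [h, Finset.sum_ite_eq]
  · simp [h]

/-- The marginal of `Z` is pinned down by `P`. -/
lemma prZ_marg {P : ProbMass (Obs 𝒴 D Z)} {Q : ProbMass (Latent 𝒴 D Z)}
    (hR : Rationalizes Q P) (z : Z) :
    pr Q {ω | ω.2.2 = z} = prZ P z := by
  have := pr_obs_pull hR (fun o => o.2.2 = z)
  rw [prZ]
  exact this.symm

lemma Tmap_fiber (y : ↥𝒴) (d : D) (z : Z) :
    {ω : Latent 𝒴 D Z | Tmap ω = (y, d, z)}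
      = {ω : Latent 𝒴 D Z | ω.1 d = y ∧ ω.2.1 z = d ∧ ω.2.2 = z} := by
  ext ω
  simp only [Set.mem_setOf_eq, Tmap, Prod.mk.injEq]
  constructor
  · rintro ⟨h1, h2, h3⟩
    rw [h3] at h2
    rw [h3, h2] at h1
    exact ⟨h1, h2, h3⟩
  · rintro ⟨h1, h2, h3⟩
    rw [h3, h2]
    exact ⟨h1, h2.symm ▸ rfl, rfl⟩

/-- Under weak exogeneity and rationalization, the joint law of `(Y_d, D_z)` on the
diagonal event `{D_z = d}` is pinned down by `P`. -/
lemma joint_pin {P : ProbMass (Obs 𝒴 D Z)} {Q : ProbMass (Latent 𝒴 D Z)}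
    (hW : WeakExog Q) (hR : Rationalizes Q P) {z : Z} (hz : prZ P z ≠ 0) (d : D) (y : ↥𝒴) :
    pr Q {ω | ω.1 d = y ∧ ω.2.1 z = d} = P.mass (y, d, z) / prZ P z := by
  have h1 : P.mass (y, d, z) = pr Q {ω | ω.1 d = y ∧ ω.2.1 z = d ∧ ω.2.2 = z} := by
    rw [hR (y, d, z)]
    exact congrArg (pr Q) (Tmap_fiber y d z)
  rw [hW d z y d z, prZ_marg hR z] at h1
  rw [h1, mul_div_cancel_right₀ _ hz]

/-- The marginal of `D_z` is pinned down by `P`. -/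
lemma margD_pin {P : ProbMass (Obs 𝒴 D Z)} {Q : ProbMass (Latent 𝒴 D Z)}
    (hW : WeakExog Q) (hR : Rationalizes Q P) {z : Z} (hz : prZ P z ≠ 0) (d : D) :
    pr Q {ω | ω.2.1 z = d} = ∑ y : ↥𝒴, P.mass (y, d, z) / prZ P z := by
  have part : pr Q {ω | ω.2.1 z = d} = ∑ y : ↥𝒴, pr Q {ω | ω.1 d = y ∧ ω.2.1 z = d} := by
    simp only [pr_eq_sum]
    rw [Finset.sum_comm]
    refine Finset.sum_congr rfl fun ω _ => ?_
    by_cases h : ω.2.1 z = d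
    · simp [h, Finset.sum_ite_eq]
    · simp [h]
  rw [part]
  exact Finset.sum_congr rfl fun y _ => joint_pin hW hR hz d y

/-- Under `MaxEnc`, events `{hits}` and `{D_{zs} = d}` agree up to a null set. -/
lemma pr_hits {Qb : ProbMass (Latent 𝒴 D Z)} {d : D} {zs : Z}
    (hM : MaxEnc Qb d zs) (C : Latent 𝒴 D Z → Prop) :
    pr Qb {ω | C ω ∧ hitsD d ω.2.1} = pr Qb {ω | C ω ∧ ω.2.1 zs = d} := by
  rw [pr_eq_sum, pr_eq_sum]
  refine Finset.sum_congr rfl fun ω _ => ?_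
  by_cases hzs : ω.2.1 zs = d
  · have hh : hitsD d ω.2.1 := ⟨zs, hzs⟩
    simp [hh, hzs]
  · by_cases hhit : hitsD d ω.2.1
    · have h0 : Qb.mass ω = 0 := mass_zero Qb hM ⟨hzs, hhit⟩
      simp [h0]
    · simp [hhit, hzs]

lemma lamD_zero_of_bad {Qb : ProbMass (Latent 𝒴 D Z)} {d : D} {zs : Z}
    (hM : MaxEnc Qb d zs) {dz : Z → D} (hbad : dz zs ≠ d ∧ hitsD d dz) :
    lamD Qb dz = 0 := by
  rw [lamD, pr_eq_sum]
  apply Finset.sum_eq_zero; intro ω _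
  by_cases h : ω.2.1 = dz
  · have h0 : Qb.mass ω = 0 := by
      refine mass_zero Qb hM ?_
      rw [Set.mem_setOf_eq, h]
      exact hbad
    simp [h0]
  · simp [h]

lemma sum_prZ (P : ProbMass (Obs 𝒴 D Z)) : ∑ z, prZ P z = 1 := by
  simp only [prZ, pr_eq_sum]
  rw [Finset.sum_comm, ← P.total]
  refine Finset.sum_congr rfl fun o _ => ?_
  have base : (∑ x : Z, if o.2.2 = x then P.mass o else 0) = P.mass o := by
    simp [Finset.sum_ite_eq]
  refine (Finset.sum_congr rfl fun x _ => ?_).trans base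
  by_cases h : o.2.2 = x <;> simp [h]

/-- Splitting a sum according to a predicate. -/
lemma sum_split {α : Type} [Fintype α] (C : α → Prop) (F : α → ℝ) :
    ∑ a, F a = (∑ a, if C a then F a else 0) + ∑ a, if ¬ C a then F a else 0 := by
  rw [← Finset.sum_add_distrib]
  refine Finset.sum_congr rfl fun a _ => ?_
  by_cases h : C a <;> simp [h]

/-- Partitioning `E[Y_d · 1_C]` by the value of `Y_d`. -/
lemma sum_weight (Q : ProbMass (Latent 𝒴 D Z)) (C : Latent 𝒴 D Z → Prop) (d : D) :
    ∑ ω : Latent 𝒴 D Z, (if C ω then Q.mass ω * ((ω.1 d : ℝ)) else 0)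
      = ∑ y : ↥𝒴, (y : ℝ) * pr Q {ω | ω.1 d = y ∧ C ω} := by
  simp only [pr_eq_sum, Finset.mul_sum]
  rw [Finset.sum_comm]
  refine Finset.sum_congr rfl fun ω _ => ?_
  by_cases hC : C ω
  · simp only [hC, and_true, Set.mem_setOf_eq, if_true, mul_ite, mul_zero]
    rw [Finset.sum_ite_eq Finset.univ (ω.1 d) (fun y : ↥𝒴 => (y : ℝ) * Q.mass ω)]
    simp [mul_comm]
  · simp [hC]

end Corollary33Obs
section Corollary33QnewDef

open Classical

variable {𝒴 : Finset ℝ} {D Z : Type} [Fintype D] [DecidableEq D] [Fintype Z] [DecidableEq Z]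

noncomputable def bodyF (Qb : ProbMass (Latent 𝒴 D Z)) (yb yt : ↥𝒴) (t : D → ℝ)
    (yd : D → ↥𝒴) (dz : Z → D) : ℝ :=
  lamD Qb dz * ∏ d, kappaD Qb yb yt t d (yd d) dz

lemma bodyF_nonneg (Qb : ProbMass (Latent 𝒴 D Z)) (yb yt : ↥𝒴) {t : D → ℝ}
    (ht : ∀ d, 0 ≤ t d ∧ t d ≤ 1) (yd : D → ↥𝒴) (dz : Z → D) :
    0 ≤ bodyF Qb yb yt t yd dz :=
  mul_nonneg (lamD_nonneg _ _)
    (Finset.prod_nonneg fun d _ => kappaD_nonneg Qb yb yt ht d (yd d) dz)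

lemma sum_yd_bodyF (Qb : ProbMass (Latent 𝒴 D Z)) {yb yt : ↥𝒴} (hy : yb ≠ yt) (t : D → ℝ)
    (dz : Z → D) : ∑ yd : D → ↥𝒴, bodyF Qb yb yt t yd dz = lamD Qb dz := by
  by_cases h : lamD Qb dz = 0
  · simp [bodyF, h]
  · unfold bodyF
    rw [← Finset.mul_sum, ← Fintype.prod_sum (fun d y => kappaD Qb yb yt t d y dz),
      Finset.prod_eq_one fun d _ => sum_kappaD Qb hy t d h, mul_one]

lemma sum_bodyF (Qb : ProbMass (Latent 𝒴 D Z)) {yb yt : ↥𝒴} (hy : yb ≠ yt) (t : D → ℝ) :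
    ∑ dz : Z → D, ∑ yd : D → ↥𝒴, bodyF Qb yb yt t yd dz = 1 := by
  calc ∑ dz : Z → D, ∑ yd : D → ↥𝒴, bodyF Qb yb yt t yd dz
      = ∑ dz : Z → D, lamD Qb dz := Finset.sum_congr rfl fun dz _ => sum_yd_bodyF Qb hy t dz
    _ = 1 := sum_lamD Qb

/-- The constructed latent distribution. -/
noncomputable def QnewPM (P : ProbMass (Obs 𝒴 D Z)) (Qb : ProbMass (Latent 𝒴 D Z))
    (yb yt : ↥𝒴) (t : D → ℝ) (hy : yb ≠ yt) (ht : ∀ d, 0 ≤ t d ∧ t d ≤ 1) :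
    ProbMass (Latent 𝒴 D Z) where
  mass ω := prZ P ω.2.2 * bodyF Qb yb yt t ω.1 ω.2.1
  nonneg ω := mul_nonneg (pr_nonneg' _ _) (bodyF_nonneg Qb yb yt ht _ _)
  total := by
    have e1 : ∑ ω : Latent 𝒴 D Z, prZ P ω.2.2 * bodyF Qb yb yt t ω.1 ω.2.1
        = ∑ yd : D → ↥𝒴, ∑ dz : Z → D, ∑ z : Z, prZ P z * bodyF Qb yb yt t yd dz := by
      rw [Fintype.sum_prod_type]
      exact Finset.sum_congr rfl fun yd _ => by rw [Fintype.sum_prod_type]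
    rw [e1]
    have e2 : ∀ (yd : D → ↥𝒴) (dz : Z → D),
        ∑ z : Z, prZ P z * bodyF Qb yb yt t yd dz = bodyF Qb yb yt t yd dz := by
      intro yd dz; rw [← Finset.sum_mul, sum_prZ, one_mul]
    calc ∑ yd : D → ↥𝒴, ∑ dz : Z → D, ∑ z : Z, prZ P z * bodyF Qb yb yt t yd dz
        = ∑ yd : D → ↥𝒴, ∑ dz : Z → D, bodyF Qb yb yt t yd dz :=
          Finset.sum_congr rfl fun yd _ => Finset.sum_congr rfl fun dz _ => e2 yd dz
      _ = ∑ dz : Z → D, ∑ yd : D → ↥𝒴, bodyF Qb yb yt t yd dz := Finset.sum_comm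
      _ = 1 := sum_bodyF Qb hy t

@[simp] lemma QnewPM_mass (P : ProbMass (Obs 𝒴 D Z)) (Qb : ProbMass (Latent 𝒴 D Z))
    (yb yt : ↥𝒴) (t : D → ℝ) (hy : yb ≠ yt) (ht : ∀ d, 0 ≤ t d ∧ t d ≤ 1)
    (ω : Latent 𝒴 D Z) :
    (QnewPM P Qb yb yt t hy ht).mass ω = prZ P ω.2.2 * bodyF Qb yb yt t ω.1 ω.2.1 := rfl

variable (P : ProbMass (Obs 𝒴 D Z)) (Qb : ProbMass (Latent 𝒴 D Z))
  (yb yt : ↥𝒴) (t : D → ℝ) (hy : yb ≠ yt) (ht : ∀ d, 0 ≤ t d ∧ t d ≤ 1)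

lemma pr_Qnew_zcyl (A : (D → ↥𝒴) → (Z → D) → Prop) (zv : Z) (S : Set (Latent 𝒴 D Z))
    (hS : ∀ ω : Latent 𝒴 D Z, ω ∈ S ↔ (A ω.1 ω.2.1 ∧ ω.2.2 = zv)) :
    pr (QnewPM P Qb yb yt t hy ht) S
      = (∑ yd : D → ↥𝒴, ∑ dz : Z → D, if A yd dz then bodyF Qb yb yt t yd dz else 0)
          * prZ P zv := by
  rw [pr_eq_sum]
  simp only [Fintype.sum_prod_type]
  rw [Finset.sum_mul]
  refine Finset.sum_congr rfl fun yd _ => ?_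
  rw [Finset.sum_mul]
  refine Finset.sum_congr rfl fun dz _ => ?_
  by_cases hA : A yd dz
  · have e1 : ∀ z : Z,
        (if (yd, dz, z) ∈ S then (QnewPM P Qb yb yt t hy ht).mass (yd, dz, z) else 0)
        = if z = zv then prZ P z * bodyF Qb yb yt t yd dz else 0 := by
      intro z
      by_cases hz : z = zv
      · rw [if_pos ((hS _).2 ⟨hA, hz⟩), if_pos hz, QnewPM_mass]
      · rw [if_neg (fun hmem => hz ((hS _).1 hmem).2), if_neg hz]
    refine (Finset.sum_congr rfl fun z _ => e1 z).trans ?_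
    have base : ∑ z : Z, (if z = zv then prZ P z * bodyF Qb yb yt t yd dz else 0)
        = prZ P zv * bodyF Qb yb yt t yd dz := by
      rw [Finset.sum_ite_eq' Finset.univ zv fun z => prZ P z * bodyF Qb yb yt t yd dz]
      simp
    rw [base, if_pos hA]; ring
  · rw [if_neg hA, zero_mul]
    apply Finset.sum_eq_zero; intro z _
    rw [if_neg (fun hmem => hA ((hS _).1 hmem).1)]

lemma pr_Qnew_cyl (A : (D → ↥𝒴) → (Z → D) → Prop) (S : Set (Latent 𝒴 D Z))
    (hS : ∀ ω : Latent 𝒴 D Z, ω ∈ S ↔ A ω.1 ω.2.1) :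
    pr (QnewPM P Qb yb yt t hy ht) S
      = ∑ yd : D → ↥𝒴, ∑ dz : Z → D, if A yd dz then bodyF Qb yb yt t yd dz else 0 := by
  rw [pr_eq_sum]
  simp only [Fintype.sum_prod_type]
  refine Finset.sum_congr rfl fun yd _ => ?_
  refine Finset.sum_congr rfl fun dz _ => ?_
  by_cases hA : A yd dz
  · have e1 : ∀ z : Z,
        (if (yd, dz, z) ∈ S then (QnewPM P Qb yb yt t hy ht).mass (yd, dz, z) else 0)
        = prZ P z * bodyF Qb yb yt t yd dz := by
      intro z
      rw [if_pos ((hS _).2 hA), QnewPM_mass]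
    refine (Finset.sum_congr rfl fun z _ => e1 z).trans ?_
    rw [← Finset.sum_mul, sum_prZ, one_mul, if_pos hA]
  · rw [if_neg hA]
    apply Finset.sum_eq_zero; intro z _
    rw [if_neg (fun hmem => hA ((hS _).1 hmem))]

lemma prZ_Qnew (zv : Z) :
    pr (QnewPM P Qb yb yt t hy ht) {ω | ω.2.2 = zv} = prZ P zv := by
  rw [pr_Qnew_zcyl P Qb yb yt t hy ht (fun _ _ => True) zv {ω | ω.2.2 = zv}
    (fun ω => by simp)]
  have h2 : ∑ yd : D → ↥𝒴, ∑ dz : Z → D, bodyF Qb yb yt t yd dz = 1 := by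
    rw [Finset.sum_comm]; exact sum_bodyF Qb hy t
  have step : ∀ {x : ℝ}, x = 1 → x * prZ P zv = prZ P zv := fun h => by rw [h, one_mul]
  apply step
  refine (Finset.sum_congr rfl fun yd _ => Finset.sum_congr rfl fun dz _ => ?_).trans h2
  exact if_pos trivial

lemma weakExog_Qnew : WeakExog (QnewPM P Qb yb yt t hy ht) := by
  intro d z y dv zv
  rw [pr_Qnew_zcyl P Qb yb yt t hy ht (fun yd dz => yd d = y ∧ dz z = dv) zv
      {ω | ω.1 d = y ∧ ω.2.1 z = dv ∧ ω.2.2 = zv}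
      (fun ω => and_assoc.symm),
    pr_Qnew_cyl P Qb yb yt t hy ht (fun yd dz => yd d = y ∧ dz z = dv)
      {ω | ω.1 d = y ∧ ω.2.1 z = dv} (fun ω => Iff.rfl),
    prZ_Qnew P Qb yb yt t hy ht zv]

lemma genMono_Qnew (hGMb : GenMono Qb) : GenMono (QnewPM P Qb yb yt t hy ht) := by
  intro d
  obtain ⟨zs, hM⟩ := hGMb d
  refine ⟨zs, ?_⟩
  unfold MaxEnc
  rw [pr_Qnew_cyl P Qb yb yt t hy ht (fun _ dz => dz zs ≠ d ∧ hitsD d dz)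
    {ω | ω.2.1 zs ≠ d ∧ ∃ z' : Z, ω.2.1 z' = d} (fun ω => Iff.rfl)]
  apply Finset.sum_eq_zero; intro yd _
  apply Finset.sum_eq_zero; intro dz _
  by_cases hbad : dz zs ≠ d ∧ hitsD d dz
  · rw [if_pos hbad]
    unfold bodyF
    rw [lamD_zero_of_bad hM hbad, zero_mul]
  · rw [if_neg hbad]

end Corollary33QnewDef
section Corollary33Qnew2

open Classical

variable {𝒴 : Finset ℝ} {D Z : Type} [Fintype D] [DecidableEq D] [Fintype Z] [DecidableEq Z]
variable (P : ProbMass (Obs 𝒴 D Z)) (Qb : ProbMass (Latent 𝒴 D Z))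
  (yb yt : ↥𝒴) (t : D → ℝ) (hy : yb ≠ yt) (ht : ∀ d, 0 ≤ t d ∧ t d ≤ 1)

lemma inner_sum_eq_mu (hy' : yb ≠ yt) (y : ↥𝒴) (dv : D) (z : Z)
    (A : (D → ↥𝒴) → (Z → D) → Prop)
    (hA : ∀ (yd : D → ↥𝒴) (dz : Z → D), A yd dz ↔ (yd dv = y ∧ dz z = dv)) :
    (∑ yd : D → ↥𝒴, ∑ dz : Z → D, if A yd dz then bodyF Qb yb yt t yd dz else 0)
      = pr Qb {ω | ω.1 dv = y ∧ ω.2.1 z = dv} := by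
  have repl : ∀ (yd : D → ↥𝒴) (dz : Z → D),
      (if A yd dz then bodyF Qb yb yt t yd dz else 0)
        = (if yd dv = y ∧ dz z = dv then bodyF Qb yb yt t yd dz else 0) := by
    intro yd dz
    by_cases h : yd dv = y ∧ dz z = dv
    · rw [if_pos ((hA _ _).2 h), if_pos h]
    · rw [if_neg (fun hh => h ((hA _ _).1 hh)), if_neg h]
  refine (Finset.sum_congr rfl fun yd _ =>
    Finset.sum_congr rfl fun dz _ => repl yd dz).trans ?_
  rw [Finset.sum_comm]
  have step : ∀ dz : Z → D,
      (∑ yd : D → ↥𝒴, if yd dv = y ∧ dz z = dv then bodyF Qb yb yt t yd dz else 0)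
        = (if dz z = dv then muD Qb dv y dz else 0) := by
    intro dz
    by_cases hz : dz z = dv
    · rw [if_pos hz]
      by_cases hl : lamD Qb dz = 0
      · rw [muD_eq_zero Qb hl]
        apply Finset.sum_eq_zero; intro yd _
        by_cases hyd : yd dv = y ∧ dz z = dv <;> simp [hyd, bodyF, hl]
      · have e1 : ∀ yd : D → ↥𝒴,
            (if yd dv = y ∧ dz z = dv then bodyF Qb yb yt t yd dz else 0)
              = lamD Qb dz * ((∏ d', kappaD Qb yb yt t d' (yd d') dz)
                  * (if yd dv = y then 1 else 0)) := by
          intro yd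
          by_cases hyd : yd dv = y
          · rw [if_pos ⟨hyd, hz⟩, if_pos hyd, bodyF]; ring
          · rw [if_neg (fun hh => hyd hh.1), if_neg hyd]; ring
        refine (Finset.sum_congr rfl fun yd _ => e1 yd).trans ?_
        rw [← Finset.mul_sum,
          sum_prod_kappa Qb hy' t dv hl (fun y' => if y' = y then 1 else 0)]
        have e2 : ∑ y' : ↥𝒴, kappaD Qb yb yt t dv y' dz * (if y' = y then 1 else 0)
            = kappaD Qb yb yt t dv y dz := by
          have base := Finset.sum_ite_eq' Finset.univ y
            (fun y' : ↥𝒴 => kappaD Qb yb yt t dv y' dz)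
          simp only [Finset.mem_univ, if_true] at base
          refine Eq.trans (Finset.sum_congr rfl fun y' _ => ?_) base
          by_cases h : y' = y <;> simp [h]
        rw [e2]
        have hhit : hitsD dv dz := ⟨z, hz⟩
        rw [kappaD, if_pos hhit, mul_comm, div_mul_cancel₀ _ hl]
    · rw [if_neg hz]
      apply Finset.sum_eq_zero; intro yd _
      rw [if_neg (fun hh => hz hh.2)]
  refine (Finset.sum_congr rfl fun dz _ => step dz).trans ?_
  have sf := sum_fiber Qb (fun ω => ω.1 dv = y) (fun dz => dz z = dv)
  refine Eq.trans ?_ sf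
  refine Finset.sum_congr rfl fun dz _ => ?_
  by_cases h : dz z = dv <;> simp [h, muD]

lemma rationalizes_Qnew (hWb : WeakExog Qb) (hRb : Rationalizes Qb P)
    (hP : ∀ z : Z, 0 < prZ P z) :
    Rationalizes (QnewPM P Qb yb yt t hy ht) P := by
  rintro ⟨y, dv, z⟩
  rw [pr_Qnew_zcyl P Qb yb yt t hy ht (fun yd dz => yd dv = y ∧ dz z = dv) z
      {ω | Tmap ω = (y, dv, z)}
      (fun ω => (Set.ext_iff.1 (Tmap_fiber y dv z) ω).trans and_assoc.symm)]
  rw [inner_sum_eq_mu Qb yb yt t hy y dv z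
      (fun yd dz => yd dv = y ∧ dz z = dv) (fun _ _ => Iff.rfl),
    joint_pin hWb hRb (ne_of_gt (hP z)) dv y,
    div_mul_cancel₀ _ (ne_of_gt (hP z))]

lemma theta_Qnew (d : D) {zsd : Z} (hM : MaxEnc Qb d zsd) :
    theta (QnewPM P Qb yb yt t hy ht) d
      = (∑ y : ↥𝒴, (y : ℝ) * pr Qb {ω | ω.1 d = y ∧ ω.2.1 zsd = d})
        + pr Qb {ω | ¬ hitsD d ω.2.1} * (t d * (yt : ℝ) + (1 - t d) * (yb : ℝ)) := by
  have e1 : theta (QnewPM P Qb yb yt t hy ht) d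
      = ∑ yd : D → ↥𝒴, ∑ dz : Z → D, ∑ z : Z,
          prZ P z * bodyF Qb yb yt t yd dz * ((yd d : ℝ)) := by
    show ∑ ω : Latent 𝒴 D Z, (QnewPM P Qb yb yt t hy ht).mass ω * ((ω.1 d : ℝ)) = _
    rw [Fintype.sum_prod_type]
    refine Finset.sum_congr rfl fun yd _ => ?_
    rw [Fintype.sum_prod_type]
    exact Finset.sum_congr rfl fun dz _ => Finset.sum_congr rfl fun z _ => rfl
  rw [e1]
  have e2 : ∀ (yd : D → ↥𝒴) (dz : Z → D),
      ∑ z : Z, prZ P z * bodyF Qb yb yt t yd dz * ((yd d : ℝ))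
        = bodyF Qb yb yt t yd dz * ((yd d : ℝ)) := by
    intro yd dz
    rw [← Finset.sum_mul, ← Finset.sum_mul, sum_prZ, one_mul]
  rw [Finset.sum_congr rfl fun yd _ => Finset.sum_congr rfl fun dz _ => e2 yd dz,
    Finset.sum_comm]
  have key : ∀ dz : Z → D,
      ∑ yd : D → ↥𝒴, bodyF Qb yb yt t yd dz * ((yd d : ℝ))
        = if hitsD d dz then (∑ y : ↥𝒴, (y : ℝ) * muD Qb d y dz)
          else lamD Qb dz * (t d * (yt : ℝ) + (1 - t d) * (yb : ℝ)) := by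
    intro dz
    by_cases hl : lamD Qb dz = 0
    · rw [Finset.sum_eq_zero fun yd _ => by simp [bodyF, hl]]
      by_cases hh : hitsD d dz
      · rw [if_pos hh]
        symm; apply Finset.sum_eq_zero; intro y _
        rw [muD_eq_zero Qb hl, mul_zero]
      · rw [if_neg hh, hl, zero_mul]
    · have e3 : ∀ yd : D → ↥𝒴, bodyF Qb yb yt t yd dz * ((yd d : ℝ))
          = lamD Qb dz * ((∏ d', kappaD Qb yb yt t d' (yd d') dz) * ((yd d : ℝ))) := by
        intro yd; rw [bodyF]; ring
      refine (Finset.sum_congr rfl fun yd _ => e3 yd).trans ?_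
      rw [← Finset.mul_sum, sum_prod_kappa Qb hy t d hl (fun y => (y : ℝ))]
      by_cases hh : hitsD d dz
      · rw [if_pos hh, Finset.mul_sum]
        refine Finset.sum_congr rfl fun y _ => ?_
        rw [kappaD, if_pos hh]
        field_simp
      · rw [if_neg hh]
        congr 1
        have e4 : ∀ y : ↥𝒴, kappaD Qb yb yt t d y dz * (y : ℝ)
            = (y : ℝ) * nuD yb yt (t d) y := by
          intro y; rw [kappaD, if_neg hh]; ring
        exact (Finset.sum_congr rfl fun y _ => e4 y).trans (mean_nuD hy (t d))
  refine (Finset.sum_congr rfl fun dz _ => key dz).trans ?_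
  have split : ∑ dz : Z → D,
      (if hitsD d dz then (∑ y : ↥𝒴, (y : ℝ) * muD Qb d y dz)
        else lamD Qb dz * (t d * (yt : ℝ) + (1 - t d) * (yb : ℝ)))
      = (∑ dz : Z → D, if hitsD d dz then (∑ y : ↥𝒴, (y : ℝ) * muD Qb d y dz) else 0)
        + ∑ dz : Z → D, if ¬ hitsD d dz
            then lamD Qb dz * (t d * (yt : ℝ) + (1 - t d) * (yb : ℝ)) else 0 := by
    rw [← Finset.sum_add_distrib]
    refine Finset.sum_congr rfl fun dz _ => ?_
    by_cases h : hitsD d dz <;> simp [h]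
  rw [split]
  congr 1
  · -- hit part
    have swap : (∑ dz : Z → D, if hitsD d dz then (∑ y : ↥𝒴, (y : ℝ) * muD Qb d y dz) else 0)
        = ∑ y : ↥𝒴, (y : ℝ) * ∑ dz : Z → D, (if hitsD d dz then muD Qb d y dz else 0) := by
      have push : ∀ dz : Z → D,
          (if hitsD d dz then (∑ y : ↥𝒴, (y : ℝ) * muD Qb d y dz) else 0)
            = ∑ y : ↥𝒴, (if hitsD d dz then (y : ℝ) * muD Qb d y dz else 0) := by
        intro dz; by_cases h : hitsD d dz <;> simp [h]
      rw [Finset.sum_congr rfl fun dz _ => push dz, Finset.sum_comm]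
      refine Finset.sum_congr rfl fun y _ => ?_
      rw [Finset.mul_sum]
      refine Finset.sum_congr rfl fun dz _ => ?_
      by_cases h : hitsD d dz <;> simp [h]
    rw [swap]
    refine Finset.sum_congr rfl fun y _ => ?_
    congr 1
    have sf := sum_fiber Qb (fun ω => ω.1 d = y) (fun dz => hitsD d dz)
    have e5 : (∑ dz : Z → D, if hitsD d dz then muD Qb d y dz else 0)
        = pr Qb {ω | ω.1 d = y ∧ hitsD d ω.2.1} := by
      refine Eq.trans ?_ sf
      refine Finset.sum_congr rfl fun dz _ => ?_
      by_cases h : hitsD d dz <;> simp [h, muD]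
    rw [e5]
    exact pr_hits hM (fun ω => ω.1 d = y)
  · -- non-hit part
    have factor : (∑ dz : Z → D, if ¬ hitsD d dz
          then lamD Qb dz * (t d * (yt : ℝ) + (1 - t d) * (yb : ℝ)) else 0)
        = (∑ dz : Z → D, if ¬ hitsD d dz then lamD Qb dz else 0)
            * (t d * (yt : ℝ) + (1 - t d) * (yb : ℝ)) := by
      rw [Finset.sum_mul]
      refine Finset.sum_congr rfl fun dz _ => ?_
      by_cases h : hitsD d dz <;> simp [h]
    rw [factor]
    congr 1
    have sf := sum_fiber Qb (fun _ => True) (fun dz => ¬ hitsD d dz)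
    have e6 : (∑ dz : Z → D, if ¬ hitsD d dz then lamD Qb dz else 0)
        = pr Qb {ω | True ∧ ¬ hitsD d ω.2.1} := by
      refine Eq.trans ?_ sf
      refine Finset.sum_congr rfl fun dz _ => ?_
      by_cases h : hitsD d dz
      · simp [h]
      · simp only [h, not_false_iff, if_true]
        exact pr_congr Qb fun ω => by simp [lamD]
    rw [e6]
    exact pr_congr Qb fun ω => by simp

end Corollary33Qnew2
section Corollary33Decomp

open Classical

variable {𝒴 : Finset ℝ} {D Z : Type} [Fintype D] [DecidableEq D] [Fintype Z] [DecidableEq Z]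

/-- Decomposition of `E_Q[Y_d]` into the pinned-down part on `{D_{zs} = d}` and a
remainder bounded by the range of `𝒴` times `Q{D_{zs} ≠ d}`. -/
lemma theta_decomp (Q : ProbMass (Latent 𝒴 D Z)) (d : D) (zsd : Z) (lo hi : ℝ)
    (hlo : ∀ y : ↥𝒴, lo ≤ (y : ℝ)) (hhi : ∀ y : ↥𝒴, (y : ℝ) ≤ hi) :
    lo * pr Q {ω : Latent 𝒴 D Z | ¬ ω.2.1 zsd = d}
        ≤ theta Q d
          - (∑ y : ↥𝒴, (y : ℝ) * pr Q {ω : Latent 𝒴 D Z | ω.1 d = y ∧ ω.2.1 zsd = d})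
      ∧ theta Q d
          - (∑ y : ↥𝒴, (y : ℝ) * pr Q {ω : Latent 𝒴 D Z | ω.1 d = y ∧ ω.2.1 zsd = d})
        ≤ hi * pr Q {ω : Latent 𝒴 D Z | ¬ ω.2.1 zsd = d}
      ∧ (pr Q {ω : Latent 𝒴 D Z | ¬ ω.2.1 zsd = d} = 0 →
          theta Q d
            = ∑ y : ↥𝒴, (y : ℝ) * pr Q {ω : Latent 𝒴 D Z | ω.1 d = y ∧ ω.2.1 zsd = d}) := by
  set S : ℝ := ∑ ω : Latent 𝒴 D Z,
    (if ¬ ω.2.1 zsd = d then Q.mass ω * ((ω.1 d : ℝ)) else 0) with hS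
  set T : ℝ := ∑ ω : Latent 𝒴 D Z,
    (if ω.2.1 zsd = d then Q.mass ω * ((ω.1 d : ℝ)) else 0) with hT
  have hsplit : theta Q d = T + S := by
    rw [hT, hS, ← Finset.sum_add_distrib]
    show ∑ ω : Latent 𝒴 D Z, Q.mass ω * ((ω.1 d : ℝ)) = _
    refine Finset.sum_congr rfl fun ω _ => ?_
    by_cases h : ω.2.1 zsd = d <;> simp [h]
  have hTAv : T = ∑ y : ↥𝒴, (y : ℝ)
      * pr Q {ω : Latent 𝒴 D Z | ω.1 d = y ∧ ω.2.1 zsd = d} := by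
    refine Eq.trans ?_ (sum_weight Q (fun ω : Latent 𝒴 D Z => ω.2.1 zsd = d) d)
    refine Finset.sum_congr rfl fun ω _ => ?_
    by_cases h : ω.2.1 zsd = d <;> simp [h]
  have hq_sum : pr Q {ω : Latent 𝒴 D Z | ¬ ω.2.1 zsd = d}
      = ∑ ω : Latent 𝒴 D Z, (if ¬ ω.2.1 zsd = d then Q.mass ω else 0) := by
    rw [pr_eq_sum]
    refine Finset.sum_congr rfl fun ω _ => ?_
    by_cases h : ω.2.1 zsd = d <;> simp [h]
  have hRS : theta Q d - (∑ y : ↥𝒴, (y : ℝ)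
      * pr Q {ω : Latent 𝒴 D Z | ω.1 d = y ∧ ω.2.1 zsd = d}) = S := by
    rw [hsplit, hTAv]; ring
  refine ⟨?_, ?_, ?_⟩
  · rw [hRS, hq_sum, Finset.mul_sum]
    refine Finset.sum_le_sum fun ω _ => ?_
    by_cases h : ω.2.1 zsd = d
    · simp [h]
    · simp only [h, not_false_iff, if_true]
      have h1 : lo ≤ ((ω.1 d : ℝ)) := hlo (ω.1 d)
      nlinarith [Q.nonneg ω]
  · rw [hRS, hq_sum, Finset.mul_sum]
    refine Finset.sum_le_sum fun ω _ => ?_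
    by_cases h : ω.2.1 zsd = d
    · simp [h]
    · simp only [h, not_false_iff, if_true]
      have h1 : ((ω.1 d : ℝ)) ≤ hi := hhi (ω.1 d)
      nlinarith [Q.nonneg ω]
  · intro h0
    have hS0 : S = 0 := by
      rw [hS]
      apply Finset.sum_eq_zero; intro ω _
      by_cases h : ω.2.1 zsd = d
      · simp [h]
      · have hm : Q.mass ω = 0 :=
          mass_zero Q (A := {ω : Latent 𝒴 D Z | ¬ ω.2.1 zsd = d}) h0 h
        simp [hm]
    have := hRS
    rw [hS0] at this
    linarith [this]

end Corollary33Decomp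
/-- Corollary 3.3: adding generalized monotonicity to weak instrument
exogeneity does not change the identified set for the vector of average potential outcomes
whenever these assumptions are consistent with `P`. -/
theorem genMono_no_identifying_power_beyond_weak_exogeneity
    (𝒴 : Finset ℝ) (h𝒴 : 2 ≤ 𝒴.card)
    (D Z : Type) [Fintype D] [DecidableEq D] [Nontrivial D]
    [Fintype Z] [DecidableEq Z] [Nontrivial Z]
    (P : ProbMass (Obs 𝒴 D Z))
    (hP : ∀ z : Z, 0 < prZ P z)
    (hne : (Q0 P {Q : ProbMass (Latent 𝒴 D Z) | WeakExog Q ∧ GenMono Q}).Nonempty) :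
    Theta0 P {Q : ProbMass (Latent 𝒴 D Z) | WeakExog Q ∧ GenMono Q}
      = Theta0 P {Q : ProbMass (Latent 𝒴 D Z) | WeakExog Q} := by
  classical
  obtain ⟨Qb, ⟨hWb, hGMb⟩, hRb⟩ := hne
  apply Set.Subset.antisymm
  · exact Set.image_mono fun Q hQ => ⟨hQ.1.1, hQ.2⟩
  · rintro θv ⟨Q, ⟨hWQ, hRQ⟩, rfl⟩
    have hWQ' : WeakExog Q := hWQ
    have h0 : 𝒴.Nonempty := Finset.card_pos.1 (by omega)
    have hlt : 𝒴.min' h0 < 𝒴.max' h0 := Finset.min'_lt_max'_of_card 𝒴 (by omega)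
    set yb : ↥𝒴 := ⟨𝒴.min' h0, 𝒴.min'_mem h0⟩ with hyb
    set yt : ↥𝒴 := ⟨𝒴.max' h0, 𝒴.max'_mem h0⟩ with hyt
    have hylt : (yb : ℝ) < (yt : ℝ) := hlt
    have hy : yb ≠ yt := fun h => absurd (congrArg Subtype.val h) (ne_of_lt hylt)
    choose zs hzs using hGMb
    have hGMb' : GenMono Qb := fun d => ⟨zs d, hzs d⟩
    have hznz : ∀ z : Z, prZ P z ≠ 0 := fun z => ne_of_gt (hP z)
    set Av : D → ℝ := fun d =>
      ∑ y : ↥𝒴, (y : ℝ) * pr Q {ω : Latent 𝒴 D Z | ω.1 d = y ∧ ω.2.1 (zs d) = d} with hAvdef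
    set qv : D → ℝ := fun d => pr Q {ω : Latent 𝒴 D Z | ¬ ω.2.1 (zs d) = d} with hqvdef
    set Bv : D → ℝ := fun d => theta Q d - Av d with hBvdef
    set t : D → ℝ := fun d =>
      max 0 (min 1 ((Bv d / qv d - (yb : ℝ)) / ((yt : ℝ) - (yb : ℝ)))) with htdef
    have ht : ∀ d, 0 ≤ t d ∧ t d ≤ 1 := fun d =>
      ⟨le_max_left _ _, max_le zero_le_one (min_le_left _ _)⟩
    have key : ∀ d : D,
        qv d * (t d * (yt : ℝ) + (1 - t d) * (yb : ℝ)) = Bv d := by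
      intro d
      obtain ⟨hlb, hub, hzero⟩ := theta_decomp Q d (zs d) ((yb : ℝ)) ((yt : ℝ))
        (fun y => 𝒴.min'_le _ y.2) (fun y => 𝒴.le_max' _ y.2)
      have hlb' : (yb : ℝ) * qv d ≤ Bv d := hlb
      have hub' : Bv d ≤ (yt : ℝ) * qv d := hub
      have hqnn : 0 ≤ qv d := pr_nonneg' Q _
      rcases eq_or_lt_of_le hqnn with hq0 | hq
      · have hB0 : Bv d = 0 := by
          have h1 := hzero hq0.symm
          show theta Q d - Av d = 0
          rw [hAvdef]
          simp only
          rw [h1]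
          ring
        rw [← hq0, zero_mul, hB0]
      · have hyne : (yt : ℝ) - (yb : ℝ) ≠ 0 := by linarith
        have hb1 : (yb : ℝ) ≤ Bv d / qv d := by
          rw [le_div_iff₀ hq]; linarith
        have hb2 : Bv d / qv d ≤ (yt : ℝ) := by
          rw [div_le_iff₀ hq]; linarith
        have hr0 : 0 ≤ (Bv d / qv d - (yb : ℝ)) / ((yt : ℝ) - (yb : ℝ)) :=
          div_nonneg (by linarith) (by linarith)
        have hr1 : (Bv d / qv d - (yb : ℝ)) / ((yt : ℝ) - (yb : ℝ)) ≤ 1 := by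
          rw [div_le_one (by linarith)]; linarith
        have htr : t d = (Bv d / qv d - (yb : ℝ)) / ((yt : ℝ) - (yb : ℝ)) := by
          show max 0 (min 1 ((Bv d / qv d - (yb : ℝ)) / ((yt : ℝ) - (yb : ℝ)))) = _
          rw [min_eq_right hr1, max_eq_right hr0]
        rw [htr]
        have hmul : ((Bv d / qv d - (yb : ℝ)) / ((yt : ℝ) - (yb : ℝ)))
            * ((yt : ℝ) - (yb : ℝ)) = Bv d / qv d - (yb : ℝ) :=
          div_mul_cancel₀ _ hyne
        have hqd : qv d * (Bv d / qv d) = Bv d := mul_div_cancel₀ _ (ne_of_gt hq)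
        nlinarith [hmul, hqd]
    have hAvb : ∀ d : D,
        (∑ y : ↥𝒴, (y : ℝ) * pr Qb {ω : Latent 𝒴 D Z | ω.1 d = y ∧ ω.2.1 (zs d) = d})
          = Av d := by
      intro d
      refine Finset.sum_congr rfl fun y _ => ?_
      rw [joint_pin hWb hRb (hznz (zs d)) d y, ← joint_pin hWQ' hRQ (hznz (zs d)) d y]
    have hqvb : ∀ d : D, pr Qb {ω : Latent 𝒴 D Z | ¬ hitsD d ω.2.1} = qv d := by
      intro d
      have e_q2 : qv d = 1 - pr Q {ω : Latent 𝒴 D Z | ω.2.1 (zs d) = d} :=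
        (pr_congr Q fun ω => Iff.rfl).trans
          (pr_compl Q {ω : Latent 𝒴 D Z | ω.2.1 (zs d) = d})
      have e_q3 : pr Qb {ω : Latent 𝒴 D Z | ¬ hitsD d ω.2.1}
          = 1 - pr Qb {ω : Latent 𝒴 D Z | hitsD d ω.2.1} :=
        (pr_congr Qb fun ω => Iff.rfl).trans
          (pr_compl Qb {ω : Latent 𝒴 D Z | hitsD d ω.2.1})
      have e_q4 : pr Qb {ω : Latent 𝒴 D Z | hitsD d ω.2.1}
          = pr Qb {ω : Latent 𝒴 D Z | ω.2.1 (zs d) = d} := by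
        have h1 := pr_hits (hzs d) (fun _ : Latent 𝒴 D Z => True)
        calc pr Qb {ω : Latent 𝒴 D Z | hitsD d ω.2.1}
            = pr Qb {ω : Latent 𝒴 D Z |
                (fun _ : Latent 𝒴 D Z => True) ω ∧ hitsD d ω.2.1} :=
              pr_congr Qb fun ω => by simp
          _ = pr Qb {ω : Latent 𝒴 D Z |
                (fun _ : Latent 𝒴 D Z => True) ω ∧ ω.2.1 (zs d) = d} := h1
          _ = pr Qb {ω : Latent 𝒴 D Z | ω.2.1 (zs d) = d} :=
              pr_congr Qb fun ω => by simp
      have e_q5 : pr Q {ω : Latent 𝒴 D Z | ω.2.1 (zs d) = d}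
          = pr Qb {ω : Latent 𝒴 D Z | ω.2.1 (zs d) = d} := by
        rw [margD_pin hWQ' hRQ (hznz (zs d)) d, margD_pin hWb hRb (hznz (zs d)) d]
      rw [e_q3, e_q4, ← e_q5, e_q2]
    refine ⟨QnewPM P Qb yb yt t hy ht,
      ⟨⟨weakExog_Qnew P Qb yb yt t hy ht, genMono_Qnew P Qb yb yt t hy ht hGMb'⟩,
        rationalizes_Qnew P Qb yb yt t hy ht hWb hRb hP⟩, ?_⟩
    funext d
    rw [theta_Qnew P Qb yb yt t hy ht d (hzs d), hAvb d, hqvb d, key d]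
    have hBd : Bv d = theta Q d - Av d := rfl
    rw [hBd]
    ring
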